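/- Let m = (m_1, ..., m_r) with r ≥ 2 and m' = (m_1, ..., m_{r-2}, m_{r-1} + m_r), and let h be the map on words that replaces every occurrence of the letter r by r-1. If π is a stationary distribution of the m-TASEP and π' is defined on words of type m' by π'(v) = Σ_{u : h(u) = v} π(u), then π' is a stationary distribution of the m'-TASEP. -/

import Mathlib

/-- TASEP move at position `i` of the cyclic word `u`. -/
def tasepStep {n r : ℕ} [NeZero n] (u : Fin n → Fin r) (i : Fin n) : Fin n → Fin r :=
  if u i < u (i - 1) then Function.update (Function.update u i (u (i - 1))) (i - 1) (u i)
  else u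

/-- The TASEP transition matrix on cyclic words of length `n` over the alphabet `Fin r`. -/
def tasepMatrix {n r : ℕ} [NeZero n] (u v : Fin n → Fin r) : ℚ :=
  ((Finset.univ.filter (fun i : Fin n => tasepStep u i = v)).card : ℚ) / n

/-- `u` is a word of type `m`: letter `a` occurs exactly `m a` times. -/
def hasType {n r : ℕ} (m : Fin r → ℕ) (u : Fin n → Fin r) : Prop :=
  ∀ a : Fin r, (Finset.univ.filter (fun i => u i = a)).card = m a

/-- The map `h` replacing every occurrence of the largest letter `r` by `r - 1`
(0-indexed: the letter `r - 1` is replaced by `r - 2`). -/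
def collapseTop {n r : ℕ} [NeZero r] (u : Fin n → Fin r) : Fin n → Fin r :=
  fun i =>
    if (u i : ℕ) = r - 1 then ⟨r - 2, by have := Nat.pos_of_neZero r; omega⟩ else u i

/-- The value map underlying `collapseTop`. -/
def gmap (r : ℕ) [NeZero r] : Fin r → Fin r :=
  fun x => if (x : ℕ) = r - 1 then ⟨r - 2, by have := Nat.pos_of_neZero r; omega⟩ else x

lemma collapseTop_eq {n r : ℕ} [NeZero r] (u : Fin n → Fin r) :
    collapseTop u = gmap r ∘ u := rfl

lemma gmap_mono {r : ℕ} [NeZero r] : Monotone (gmap r) := by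
  intro x y h
  have hx := x.isLt
  have hy := y.isLt
  rw [Fin.le_def] at h
  unfold gmap
  split_ifs with h1 h2 <;> simp only [Fin.le_def] <;> omega

lemma collapse_tasepStep {n r : ℕ} [NeZero n] [NeZero r] (u : Fin n → Fin r) (i : Fin n) :
    collapseTop (tasepStep u i) = tasepStep (collapseTop u) i := by
  rw [collapseTop_eq, collapseTop_eq]
  unfold tasepStep
  by_cases h : u i < u (i - 1)
  · by_cases h2 : (gmap r ∘ u) i < (gmap r ∘ u) (i - 1)
    · rw [if_pos h, if_pos h2]
      rw [Function.comp_update, Function.comp_update]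
      rfl
    · rw [if_pos h, if_neg h2]
      have heq : gmap r (u i) = gmap r (u (i - 1)) :=
        le_antisymm (gmap_mono h.le) (not_lt.mp h2)
      rw [Function.comp_update, Function.comp_update]
      funext j
      simp only [Function.update_apply, Function.comp_apply]
      split_ifs with hj1 hj2
      · subst hj1; exact heq
      · subst hj2; exact heq.symm
      · rfl
  · have h2 : ¬ (gmap r ∘ u) i < (gmap r ∘ u) (i - 1) :=
      not_lt.mpr (gmap_mono (not_lt.mp h))
    rw [if_neg h, if_neg h2]

lemma matrix_decomp {n r : ℕ} [NeZero n] [NeZero r] (w v : Fin n → Fin r) :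
    tasepMatrix (collapseTop w) v =
      ∑ u' ∈ Finset.univ.filter (fun u' => collapseTop u' = v), tasepMatrix w u' := by
  unfold tasepMatrix
  rw [← Finset.sum_div]
  congr 1
  rw [← Nat.cast_sum]
  congr 1
  have key : (Finset.univ.filter (fun i : Fin n => tasepStep (collapseTop w) i = v)).card
      = ∑ u' ∈ Finset.univ.filter (fun u' => collapseTop u' = v),
          ((Finset.univ.filter (fun i : Fin n => tasepStep (collapseTop w) i = v)).filter
            (fun i => tasepStep w i = u')).card := by
    apply Finset.card_eq_sum_card_fiberwise (f := fun i => tasepStep w i)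
    intro i hi
    simp only [Finset.coe_filter, Finset.mem_coe, Set.mem_setOf_eq, Finset.mem_filter, Finset.mem_univ, true_and] at hi ⊢
    rw [collapse_tasepStep]
    exact hi
  rw [key]
  apply Finset.sum_congr rfl
  intro u' hu'
  simp only [Finset.mem_filter, Finset.mem_univ, true_and] at hu'
  congr 1
  rw [Finset.filter_filter]
  apply Finset.filter_congr
  intro i _
  constructor
  · rintro ⟨_, h2⟩; exact h2
  · intro h1
    exact ⟨by rw [← collapse_tasepStep, h1, hu'], h1⟩

theorem stmt_4 (r n : ℕ) [NeZero n] [NeZero r] (hr : 2 ≤ r) (m : Fin r → ℕ)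
    (hm : ∀ i, 0 < m i) (hn : n = ∑ i, m i)
    (π : (Fin n → Fin r) → ℚ)
    (hsupp : ∀ u, π u ≠ 0 → hasType m u)
    (hnonneg : ∀ u, 0 ≤ π u)
    (hsum : ∑ u : Fin n → Fin r, π u = 1)
    (hstat : ∀ v, ∑ u : Fin n → Fin r, π u * tasepMatrix u v = π v)
    (m' : Fin r → ℕ)
    (hm' : ∀ a : Fin r, m' a =
      if (a : ℕ) = r - 2 then m a + m ⟨r - 1, by omega⟩
      else if (a : ℕ) = r - 1 then 0 else m a)
    (π' : (Fin n → Fin r) → ℚ)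
    (hπ' : ∀ v, π' v = ∑ u ∈ Finset.univ.filter (fun u => collapseTop u = v), π u) :
    (∀ v, π' v ≠ 0 → hasType m' v) ∧
    (∀ v, 0 ≤ π' v) ∧
    (∑ v : Fin n → Fin r, π' v = 1) ∧
    (∀ v, ∑ u : Fin n → Fin r, π' u * tasepMatrix u v = π' v) := by
  refine ⟨?_, ?_, ?_, ?_⟩
  · -- type
    intro v hv
    rw [hπ'] at hv
    obtain ⟨u, hu, hπu⟩ := Finset.exists_ne_zero_of_sum_ne_zero hv
    simp only [Finset.mem_filter, Finset.mem_univ, true_and] at hu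
    have htype := hsupp u hπu
    intro a
    subst hu
    rw [hm' a]
    by_cases ha1 : (a : ℕ) = r - 2
    · rw [if_pos ha1]
      have hne : a ≠ (⟨r - 1, by omega⟩ : Fin r) := by
        intro h; rw [h, Fin.val_mk] at ha1; omega
      have hset : (Finset.univ.filter (fun i => collapseTop u i = a)) =
          (Finset.univ.filter (fun i => u i = a)) ∪
          (Finset.univ.filter (fun i => u i = (⟨r - 1, by omega⟩ : Fin r))) := by
        rw [← Finset.filter_or]
        apply Finset.filter_congr
        intro i _
        simp only [collapseTop]
        constructor
        · intro h
          split_ifs at h with h1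
          · right; rw [Fin.ext_iff]; exact h1
          · left; exact h
        · rintro (h | h)
          · rw [h] at *
            rw [if_neg (by omega)]
          · rw [h] at *
            rw [if_pos (by simp), Fin.ext_iff]
            simp [ha1.symm]
      rw [hset, Finset.card_union_of_disjoint, htype a, htype ⟨r - 1, by omega⟩]
      rw [Finset.disjoint_filter]
      intro i _ h1 h2
      rw [h1] at h2
      exact hne h2
    · rw [if_neg ha1]
      by_cases ha2 : (a : ℕ) = r - 1
      · rw [if_pos ha2]
        rw [Finset.card_eq_zero, Finset.filter_eq_empty_iff]
        intro i _
        simp only [collapseTop]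
        split_ifs with h1
        · rw [Fin.ext_iff]; simp; omega
        · rw [Fin.ext_iff]; omega
      · rw [if_neg ha2, ← htype a]
        congr 1
        apply Finset.filter_congr
        intro i _
        simp only [collapseTop]
        split_ifs with h1
        · constructor
          · intro h; rw [Fin.ext_iff] at h; simp at h; omega
          · intro h; rw [h] at h1; omega
        · exact Iff.rfl
  · intro v
    rw [hπ' v]
    exact Finset.sum_nonneg fun u _ => hnonneg u
  · calc ∑ v : Fin n → Fin r, π' v
        = ∑ v : Fin n → Fin r, ∑ u ∈ Finset.univ.filter (fun u => collapseTop u = v), π u := by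
          exact Finset.sum_congr rfl fun v _ => hπ' v
      _ = ∑ u : Fin n → Fin r, π u :=
          Finset.sum_fiberwise_of_maps_to (fun x _ => Finset.mem_univ _) π
      _ = 1 := hsum
  · intro v
    calc ∑ u : Fin n → Fin r, π' u * tasepMatrix u v
        = ∑ u : Fin n → Fin r, ∑ w ∈ Finset.univ.filter (fun w => collapseTop w = u),
            π w * tasepMatrix (collapseTop w) v := by
          refine Finset.sum_congr rfl fun u _ => ?_
          rw [hπ' u, Finset.sum_mul]
          refine Finset.sum_congr rfl fun w hw => ?_
          simp only [Finset.mem_filter, Finset.mem_univ, true_and] at hw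
          rw [hw]
      _ = ∑ w : Fin n → Fin r, π w * tasepMatrix (collapseTop w) v :=
          Finset.sum_fiberwise_of_maps_to (fun x _ => Finset.mem_univ _) _
      _ = ∑ w : Fin n → Fin r, ∑ u' ∈ Finset.univ.filter (fun u' => collapseTop u' = v),
            π w * tasepMatrix w u' := by
          refine Finset.sum_congr rfl fun w _ => ?_
          rw [matrix_decomp, Finset.mul_sum]
      _ = ∑ u' ∈ Finset.univ.filter (fun u' => collapseTop u' = v),
            ∑ w : Fin n → Fin r, π w * tasepMatrix w u' := Finset.sum_comm
      _ = ∑ u' ∈ Finset.univ.filter (fun u' => collapseTop u' = v), π u' :=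
          Finset.sum_congr rfl fun u' _ => hstat u'
      _ = π' v := (hπ' v).symm
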